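/- Garner's algorithm is correct: given pairwise coprime moduli m_1, ..., m_t and residues v_1, ..., v_t with 0 ≤ v_i < m_i, the integer x it outputs satisfies 0 ≤ x < m_1⋯m_t and x ≡ v_i (mod m_i) for all i. -/
import Mathlib


/-- The iterative mixed-radix construction of Garner's algorithm:
`x₀ = v 0`, and `x_{i+1} = x_i + (((v (i+1) − x_i) · C (i+1)) mod m (i+1)) · ∏_{j ≤ i} m j`. -/
def garnerX (m : ℕ → ℕ) (C : ℕ → ℤ) (v : ℕ → ℤ) : ℕ → ℤ
  | 0 => v 0
  | i + 1 => garnerX m C v i +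
      (((v (i + 1) - garnerX m C v i) * C (i + 1)) % (m (i + 1) : ℤ)) *
        ∏ j ∈ Finset.range (i + 1), (m j : ℤ)

/-- Correctness of Garner's algorithm: given pairwise coprime moduli `m 0, …, m (t−1)`,
coefficients `C i` inverse to `∏_{j < i} m j` modulo `m i`, and residues `0 ≤ v i < m i`,
the output `x = garnerX m C v (t − 1)` satisfies `0 ≤ x < ∏_{i < t} m i` and
`x ≡ v i (mod m i)` for all `i < t`. -/
theorem garner_correct (t : ℕ) (ht : 0 < t) (m : ℕ → ℕ) (C : ℕ → ℤ) (v : ℕ → ℤ)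
    (hm : ∀ i, i < t → 0 < m i)
    (hcop : ∀ i j, i < t → j < t → i ≠ j → Nat.Coprime (m i) (m j))
    (hC : ∀ i, 0 < i → i < t →
      ((∏ j ∈ Finset.range i, (m j : ℤ)) * C i) % (m i : ℤ) = 1 % (m i : ℤ))
    (hv : ∀ i, i < t → 0 ≤ v i ∧ v i < (m i : ℤ)) :
    0 ≤ garnerX m C v (t - 1) ∧
    garnerX m C v (t - 1) < ∏ i ∈ Finset.range t, (m i : ℤ) ∧
    ∀ i, i < t → garnerX m C v (t - 1) % (m i : ℤ) = v i % (m i : ℤ) := by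
  have key : ∀ k, k < t → 0 ≤ garnerX m C v k ∧
      garnerX m C v k < ∏ i ∈ Finset.range (k + 1), (m i : ℤ) ∧
      ∀ i, i ≤ k → garnerX m C v k % (m i : ℤ) = v i % (m i : ℤ) := by
    intro k
    induction k with
    | zero =>
      intro hk
      refine ⟨(hv 0 hk).1, by simpa [garnerX] using (hv 0 hk).2, ?_⟩
      intro i hi
      interval_cases i
      rfl
    | succ k ih =>
      intro hk
      have hk' : k < t := by omega
      obtain ⟨h0, h1, h2⟩ := ih hk'
      set x := garnerX m C v k with hxdef
      set M := ∏ j ∈ Finset.range (k + 1), (m j : ℤ) with hM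
      set n := ((m (k + 1) : ℤ)) with hn
      set u := ((v (k + 1) - x) * C (k + 1)) % n with hu
      have hmk : (0 : ℤ) < n := by
        have := hm (k + 1) hk; simp [hn]; exact_mod_cast this
      have hu0 : 0 ≤ u := Int.emod_nonneg _ hmk.ne'
      have hu1 : u < n := Int.emod_lt_of_pos _ hmk
      have hX : garnerX m C v (k + 1) = x + u * M := rfl
      have hM0 : 0 ≤ M := Finset.prod_nonneg (fun j _ => by positivity)
      refine ⟨?_, ?_, ?_⟩
      · rw [hX]
        have := mul_nonneg hu0 hM0
        linarith
      · rw [hX, Finset.prod_range_succ]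
        have hle : u * M ≤ (n - 1) * M := mul_le_mul_of_nonneg_right (by omega) hM0
        have : x + u * M ≤ x + (n - 1) * M := by linarith
        calc x + u * M ≤ x + (n - 1) * M := this
          _ < M + (n - 1) * M := by linarith
          _ = M * n := by ring
          _ = (∏ j ∈ Finset.range (k + 1), (m j : ℤ)) * (m (k + 1) : ℤ) := by rw [hM, hn]
      · intro i hi
        rcases Nat.lt_or_ge i (k + 1) with h | h
        · have hdvd : (m i : ℤ) ∣ M := by
            rw [hM]
            exact Finset.dvd_prod_of_mem _ (Finset.mem_range.mpr h)
          obtain ⟨c, hc⟩ := hdvd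
          rw [hX, hc, show x + u * ((m i : ℤ) * c) = x + u * c * (m i : ℤ) by ring,
            Int.add_mul_emod_self_right]
          exact h2 i (by omega)
        · have hi' : i = k + 1 := by omega
          subst hi'
          rw [hX]
          show Int.ModEq n (x + u * M) (v (k + 1))
          have e1 : Int.ModEq n u ((v (k + 1) - x) * C (k + 1)) :=
            Int.emod_emod_of_dvd _ dvd_rfl
          have e2 : Int.ModEq n (M * C (k + 1)) 1 := hC (k + 1) (by omega) hk
          calc x + u * M ≡ x + ((v (k + 1) - x) * C (k + 1)) * M [ZMOD n] :=
                (Int.ModEq.refl x).add (e1.mul_right M)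
            _ = x + (v (k + 1) - x) * (M * C (k + 1)) := by ring
            _ ≡ x + (v (k + 1) - x) * 1 [ZMOD n] :=
                (Int.ModEq.refl x).add (Int.ModEq.mul_left _ e2)
            _ = v (k + 1) := by ring
  obtain ⟨h0, h1, h2⟩ := key (t - 1) (by omega)
  have ht1 : t - 1 + 1 = t := by omega
  rw [ht1] at h1
  exact ⟨h0, h1, fun i hi => h2 i (by omega)⟩
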